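/- Barrier (continuation) lemma: let t0 ∈ ℝ, T ∈ (t0, ∞], M > 0, α > 0, and let y : [t0, T) → ℝ be a differentiable function with y(t) ≥ 0 for all t, y(t0) = 0, and such that for every t ∈ [t0, T) with y(t) ≤ M one has y'(t) + α·y(t) ≤ α·M/2. Then y(t) ≤ (M/2)·(1 − e^{−α(t − t0)}) for all t ∈ [t0, T); in particular y(t) < M/2 < M for all t ∈ [t0, T). -/

import Mathlib

/-- Barrier (continuation) lemma. -/
theorem barrier_lemma
    (t0 : ℝ) (T : EReal) (hT : (t0 : EReal) < T)
    (M α : ℝ) (hM : 0 < M) (hα : 0 < α) (y y' : ℝ → ℝ)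
    (hderiv : ∀ t : ℝ, t0 ≤ t → (t : EReal) < T →
      HasDerivWithinAt y (y' t) (Set.Ici t0) t)
    (hnonneg : ∀ t : ℝ, t0 ≤ t → (t : EReal) < T → 0 ≤ y t)
    (hy0 : y t0 = 0)
    (hineq : ∀ t : ℝ, t0 ≤ t → (t : EReal) < T → y t ≤ M →
      y' t + α * y t ≤ α * M / 2) :
    ∀ t : ℝ, t0 ≤ t → (t : EReal) < T →
      y t ≤ (M / 2) * (1 - Real.exp (-(α * (t - t0)))) ∧ y t < M / 2 := by
  intro t ht htT
  have hexp_pos : 0 < Real.exp (-(α * (t - t0))) := Real.exp_pos _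
  have hexp_le : Real.exp (-(α * (t - t0))) ≤ 1 := by
    apply Real.exp_le_one_iff.2
    nlinarith
  have key : ∀ ε : ℝ, 0 < ε → ε ≤ M / 2 →
      y t ≤ (M / 2 + ε) * (1 - Real.exp (-(α * (t - t0)))) := by
    intro ε hε hεM
    have hB' : ∀ s : ℝ, HasDerivAt (fun s : ℝ => (M / 2 + ε) * (1 - Real.exp (-(α * (s - t0)))))
        ((M / 2 + ε) * (α * Real.exp (-(α * (s - t0))))) s := by
      intro s
      have h1 : HasDerivAt (fun s : ℝ => -(α * (s - t0))) (-α) s := by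
        have h0 := (((hasDerivAt_id s).sub_const t0).const_mul α).neg
        simp only [Pi.neg_def, id, mul_one] at h0
        exact h0
      have h2 := (Real.hasDerivAt_exp (-(α * (s - t0)))).comp s h1
      have h3 := ((hasDerivAt_const s (1 : ℝ)).sub h2).const_mul (M / 2 + ε)
      exact h3.congr_deriv (by ring)
    have hmemT : ∀ x ∈ Set.Icc t0 t, (x : EReal) < T := fun x hx =>
      lt_of_le_of_lt (EReal.coe_le_coe_iff.2 hx.2) htT
    have hcont : ContinuousOn y (Set.Icc t0 t) := fun x hx =>
      ((hderiv x hx.1 (hmemT x hx)).continuousWithinAt).mono (fun z hz => hz.1)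
    have hf' : ∀ x ∈ Set.Ico t0 t, HasDerivWithinAt y (y' x) (Set.Ici x) x := fun x hx =>
      (hderiv x hx.1 (hmemT x ⟨hx.1, le_of_lt hx.2⟩)).mono (Set.Ici_subset_Ici.2 hx.1)
    have ha : y t0 ≤ (M / 2 + ε) * (1 - Real.exp (-(α * (t0 - t0)))) := by
      simp [hy0]
    have bound : ∀ x ∈ Set.Ico t0 t,
        y x = (M / 2 + ε) * (1 - Real.exp (-(α * (x - t0)))) →
        y' x < (M / 2 + ε) * (α * Real.exp (-(α * (x - t0)))) := by
      intro x hx hyx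
      set e := Real.exp (-(α * (x - t0))) with he_def
      have he_pos : 0 < e := Real.exp_pos _
      have he_le : e ≤ 1 := by
        apply Real.exp_le_one_iff.2
        nlinarith [hx.1]
      have hyM : y x ≤ M := by
        rw [hyx]
        nlinarith
      have h := hineq x hx.1 (hmemT x ⟨hx.1, le_of_lt hx.2⟩) hyM
      rw [hyx] at h
      nlinarith
    exact image_le_of_deriv_right_lt_deriv_boundary hcont hf' ha hB' bound
      (Set.right_mem_Icc.2 ht)
  have hle : y t ≤ (M / 2) * (1 - Real.exp (-(α * (t - t0)))) := by
    apply le_of_forall_pos_le_add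
    intro ε hε
    have hε' : 0 < min ε (M / 2) := lt_min hε (by linarith)
    have := key (min ε (M / 2)) hε' (min_le_right _ _)
    have h1 : min ε (M / 2) ≤ ε := min_le_left _ _
    nlinarith
  refine ⟨hle, lt_of_le_of_lt hle ?_⟩
  nlinarith
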